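/- Let E > 0, γ̄ > 0, γ̱ > 0, ϑ ∈ ℝ, and thresholds ω̱ < ω̱thr < ω̄thr < ω̄. Define u : ℝ → ℝ by u(ω) = min{0, γ̄(ω̄ − ω)/(ω − ω̄thr) − (ϑ − Eω)} if ω > ω̄thr, u(ω) = 0 if ω̱thr ≤ ω ≤ ω̄thr, and u(ω) = max{0, γ̱(ω̱ − ω)/(ω̱thr − ω) − (ϑ − Eω)} if ω < ω̱thr. Then the equation 0 = ϑ − Eω + u(ω) has exactly one solution ω ∈ ℝ, namely ω = min(ω̄, max(ω̱, ϑ/E)); in particular the solution satisfies ω̱ ≤ ω ≤ ω̄. -/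

import Mathlib

private lemma min_trick (c d x y : ℝ) (h1 : c < d) (h2 : x < y) :
    c + min 0 (x - c) < d + min 0 (y - d) := by
  rcases le_total (x - c) 0 with h | h <;> rcases le_total (y - d) 0 with h' | h'
  · rw [min_eq_right h, min_eq_right h']; linarith
  · rw [min_eq_right h, min_eq_left h']; linarith
  · rw [min_eq_left h, min_eq_right h']; linarith
  · rw [min_eq_left h, min_eq_left h']; linarith

private lemma max_trick (c d x y : ℝ) (h1 : c < d) (h2 : x < y) :
    c + max 0 (x - c) < d + max 0 (y - d) := by
  rcases le_total (x - c) 0 with h | h <;> rcases le_total (y - d) 0 with h' | h'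
  · rw [max_eq_left h, max_eq_left h']; linarith
  · rw [max_eq_left h, max_eq_right h']; linarith
  · rw [max_eq_right h, max_eq_left h']; linarith
  · rw [max_eq_right h, max_eq_right h']; linarith

/-- for a zero-inertia node, the algebraic relation
`0 = ϑ - E ω + u(ω)` with the piecewise reference controller `u` has exactly
one solution, namely `ω = min(ω̄, max(ω̱, ϑ/E))`; in particular the solution
lies in the safe interval `[ω̱, ω̄]`. -/
theorem stmt14 (E γu γl ϑ ωl ωlthr ωuthr ωu : ℝ)
    (hE : 0 < E) (hγu : 0 < γu) (hγl : 0 < γl)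
    (h1 : ωl < ωlthr) (h2 : ωlthr < ωuthr) (h3 : ωuthr < ωu)
    (u : ℝ → ℝ)
    (hu : ∀ ω : ℝ, u ω =
      if ωuthr < ω then
        min 0 (γu * (ωu - ω) / (ω - ωuthr) - (ϑ - E * ω))
      else if ω < ωlthr then
        max 0 (γl * (ωl - ω) / (ωlthr - ω) - (ϑ - E * ω))
      else 0) :
    (0 = ϑ - E * min ωu (max ωl (ϑ / E)) + u (min ωu (max ωl (ϑ / E)))) ∧
    (∀ ω : ℝ, 0 = ϑ - E * ω + u ω → ω = min ωu (max ωl (ϑ / E))) ∧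
    ωl ≤ min ωu (max ωl (ϑ / E)) ∧ min ωu (max ωl (ϑ / E)) ≤ ωu := by
  set s : ℝ := ϑ / E with hs
  have hEs : E * s = ϑ := by rw [hs]; field_simp [hE.ne']
  -- strict antitonicity of f ω = ϑ - E ω + u ω
  have hanti : StrictAnti (fun ω : ℝ => ϑ - E * ω + u ω) := by
    intro a b hab
    have hEab : E * a < E * b := mul_lt_mul_of_pos_left hab hE
    simp only [hu a, hu b]
    split_ifs with hb1 ha1 ha2 ha1 hb2 ha2 ha2
    · -- both > ωuthr
      have hq : γu * (ωu - b) / (b - ωuthr) < γu * (ωu - a) / (a - ωuthr) := by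
        rw [div_lt_div_iff₀ (by linarith) (by linarith)]
        nlinarith [mul_pos hγu (mul_pos (sub_pos.2 hab) (sub_pos.2 h3))]
      have := min_trick (ϑ - E * b) (ϑ - E * a)
        (γu * (ωu - b) / (b - ωuthr)) (γu * (ωu - a) / (a - ωuthr))
        (by linarith) hq
      calc ϑ - E * b + min 0 (γu * (ωu - b) / (b - ωuthr) - (ϑ - E * b))
          = (ϑ - E * b) + min 0 ((γu * (ωu - b) / (b - ωuthr)) - (ϑ - E * b)) := by ring_nf
        _ < (ϑ - E * a) + min 0 ((γu * (ωu - a) / (a - ωuthr)) - (ϑ - E * a)) := this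
        _ = ϑ - E * a + min 0 (γu * (ωu - a) / (a - ωuthr) - (ϑ - E * a)) := by ring_nf
    · -- b R, a L
      have h1' := min_le_left (0:ℝ) (γu * (ωu - b) / (b - ωuthr) - (ϑ - E * b))
      have h2' := le_max_left (0:ℝ) (γl * (ωl - a) / (ωlthr - a) - (ϑ - E * a))
      linarith
    · -- b R, a M
      have h1' := min_le_left (0:ℝ) (γu * (ωu - b) / (b - ωuthr) - (ϑ - E * b))
      linarith
    · -- b L, a R : impossible
      linarith
    · -- both L
      have hq : γl * (ωl - b) / (ωlthr - b) < γl * (ωl - a) / (ωlthr - a) := by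
        rw [div_lt_div_iff₀ (by linarith) (by linarith)]
        nlinarith [mul_pos hγl (mul_pos (sub_pos.2 hab) (sub_pos.2 h1))]
      have := max_trick (ϑ - E * b) (ϑ - E * a)
        (γl * (ωl - b) / (ωlthr - b)) (γl * (ωl - a) / (ωlthr - a))
        (by linarith) hq
      calc ϑ - E * b + max 0 (γl * (ωl - b) / (ωlthr - b) - (ϑ - E * b))
          = (ϑ - E * b) + max 0 ((γl * (ωl - b) / (ωlthr - b)) - (ϑ - E * b)) := by ring_nf
        _ < (ϑ - E * a) + max 0 ((γl * (ωl - a) / (ωlthr - a)) - (ϑ - E * a)) := this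
        _ = ϑ - E * a + max 0 (γl * (ωl - a) / (ωlthr - a) - (ϑ - E * a)) := by ring_nf
    · -- b L, a M : impossible
      linarith
    · -- b M, a R : impossible
      linarith
    · -- b M, a L
      have h2' := le_max_left (0:ℝ) (γl * (ωl - a) / (ωlthr - a) - (ϑ - E * a))
      linarith
    · -- both M
      linarith
  -- existence
  have hex : 0 = ϑ - E * min ωu (max ωl s) + u (min ωu (max ωl s)) := by
    rcases le_total s ωl with hsl | hsl
    · have hmax : max ωl s = ωl := max_eq_left hsl
      have hmin : min ωu ωl = ωl := min_eq_right (by linarith)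
      rw [hmax, hmin, hu ωl]
      rw [if_neg (by linarith), if_pos (by linarith)]
      have h0 : γl * (ωl - ωl) / (ωlthr - ωl) = 0 := by
        rw [sub_self, mul_zero, zero_div]
      rw [h0]
      have hnn : (0:ℝ) ≤ 0 - (ϑ - E * ωl) := by nlinarith [mul_le_mul_of_nonneg_left hsl hE.le]
      rw [max_eq_right hnn]; ring
    · rcases le_total ωu s with hus | hus
      · have hmax : max ωl s = s := max_eq_right hsl
        have hmin : min ωu s = ωu := min_eq_left hus
        rw [hmax, hmin, hu ωu]
        rw [if_pos (by linarith)]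
        have h0 : γu * (ωu - ωu) / (ωu - ωuthr) = 0 := by
          rw [sub_self, mul_zero, zero_div]
        rw [h0]
        have hnp : 0 - (ϑ - E * ωu) ≤ 0 := by nlinarith [mul_le_mul_of_nonneg_left hus hE.le]
        rw [min_eq_right hnp]; ring
      · have hmax : max ωl s = s := max_eq_right hsl
        have hmin : min ωu s = s := min_eq_right hus
        rw [hmax, hmin, hu s]
        have hz : ϑ - E * s = 0 := by rw [hEs]; ring
        split_ifs with hc1 hc2
        · have hnn : (0:ℝ) ≤ γu * (ωu - s) / (s - ωuthr) - (ϑ - E * s) := by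
            rw [hz, sub_zero]
            apply div_nonneg (by nlinarith) (by linarith)
          rw [min_eq_left hnn, hz]; ring
        · have hnp : γl * (ωl - s) / (ωlthr - s) - (ϑ - E * s) ≤ 0 := by
            rw [hz, sub_zero]
            apply div_nonpos_of_nonpos_of_nonneg
            · nlinarith
            · linarith
          rw [max_eq_left hnp, hz]; ring
        · rw [hz]; ring
  refine ⟨hex, ?_, ?_, min_le_left _ _⟩
  · intro ω hω
    exact hanti.injective (show ϑ - E * ω + u ω = ϑ - E * min ωu (max ωl s) + u (min ωu (max ωl s)) by linarith [hex, hω])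
  · exact le_min (by linarith) (le_max_left _ _)
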